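/- arXiv:2407.21651 — 2 statements merged into one kernel-verified Lean document; each statement's English description precedes it below -/
import Mathlib

section
/- Let (X_n)_{n≥0} be a stochastic process adapted to a filtration (F_n) taking values in the finite state space {1,…,N}, and let P be an N×N stochastic matrix. Then X is a Markov chain with transition matrix P with respect to (F_n) (i.e., P(X_{n+1} = i | F_n) = P_{X_n, i} for all n, i) if and only if for every vector z ∈ ℝ^N the process M_n = z_{X_n} − z_{X_0} − Σ_{m=1}^n ((P − I)z)_{X_{m−1}} is an (F_n)-martingale. -/
open MeasureTheory

/-- Martingale-problem characterization of a finite-state Markov chain: an adapted process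
`X` on `{1,…,N}` is Markov with stochastic transition matrix `M` w.r.t. `(F_n)` iff for
every `z ∈ ℝ^N` the process
`M_n = z_{X_n} - z_{X_0} - Σ_{m=1}^n ((M - I) z)_{X_{m-1}}` is an `(F_n)`-martingale. -/
theorem stmt_9 {Ω : Type*} {m : MeasurableSpace Ω} (P : Measure Ω) [IsProbabilityMeasure P]
    (N : ℕ) (hN : 0 < N) (𝒢 : MeasureTheory.Filtration ℕ m)
    (X : ℕ → Ω → Fin N) (hadp : ∀ n, Measurable[𝒢 n] (X n))
    (M : Matrix (Fin N) (Fin N) ℝ)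
    (hnn : ∀ i j, 0 ≤ M i j) (hrow : ∀ i, ∑ j, M i j = 1) :
    (∀ n (i : Fin N),
        P[(fun ω => if X (n + 1) ω = i then (1 : ℝ) else 0)|𝒢 n] =ᵐ[P]
          fun ω => M (X n ω) i) ↔
      (∀ z : Fin N → ℝ,
        Martingale
          (fun n ω => z (X n ω) - z (X 0 ω) -
            ∑ k ∈ Finset.range n, ((∑ j, M (X k ω) j * z j) - z (X k ω)))
          𝒢 P) := by
  -- basic measurability / integrability facts
  have hXm : ∀ n, Measurable (X n) := fun n => (hadp n).mono (𝒢.le n) le_rfl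
  have hG : ∀ (n) (g : Fin N → ℝ), StronglyMeasurable[𝒢 n] (fun ω => g (X n ω)) :=
    fun n g => (Measurable.of_discrete.comp (hadp n)).stronglyMeasurable
  have hint : ∀ (n) (g : Fin N → ℝ), Integrable (fun ω => g (X n ω)) P := by
    intro n g
    refine ⟨(Measurable.of_discrete.comp (hXm n)).aestronglyMeasurable, ?_⟩
    refine HasFiniteIntegral.of_bounded (C := ∑ i, |g i|)
      (Filter.Eventually.of_forall fun ω => ?_)
    simpa [Real.norm_eq_abs] using
      Finset.single_le_sum (f := fun i => |g i|) (fun i _ => abs_nonneg _)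
        (Finset.mem_univ (X n ω))
  -- the drift function
  set g : Fin N → ℝ → (Fin N → ℝ) → ℝ := fun _ _ _ => 0 with hgdef  -- dummy, not used
  clear hgdef g
  -- the process
  set f : (Fin N → ℝ) → ℕ → Ω → ℝ := fun z n ω =>
    z (X n ω) - z (X 0 ω) -
      ∑ k ∈ Finset.range n, ((∑ j, M (X k ω) j * z j) - z (X k ω)) with hfdef
  -- splitting of f z (n+1)
  have hsplit : ∀ (z : Fin N → ℝ) (n : ℕ),
      f z (n + 1) = (fun ω => z (X (n + 1) ω)) +
        (fun ω => -(z (X 0 ω)) -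
          ∑ k ∈ Finset.range (n + 1), ((∑ j, M (X k ω) j * z j) - z (X k ω))) := by
    intro z n
    funext ω
    simp only [hfdef, Pi.add_apply]
    ring
  -- the second summand is 𝒢 n-measurable and integrable
  have hcSM : ∀ (z : Fin N → ℝ) (n : ℕ),
      StronglyMeasurable[𝒢 n] (fun ω => -(z (X 0 ω)) -
        ∑ k ∈ Finset.range (n + 1), ((∑ j, M (X k ω) j * z j) - z (X k ω))) := by
    intro z n
    refine StronglyMeasurable.sub ?_ ?_
    · exact ((hG 0 z).mono (𝒢.mono (Nat.zero_le n))).neg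
    · refine Finset.stronglyMeasurable_fun_sum _ fun k hk => ?_
      have hk' : k ≤ n := Nat.lt_succ_iff.mp (Finset.mem_range.mp hk)
      exact (hG k (fun i => (∑ j, M i j * z j) - z i)).mono (𝒢.mono hk')
  have hcInt : ∀ (z : Fin N → ℝ) (n : ℕ),
      Integrable (fun ω => -(z (X 0 ω)) -
        ∑ k ∈ Finset.range (n + 1), ((∑ j, M (X k ω) j * z j) - z (X k ω))) P := by
    intro z n
    exact ((hint 0 z).neg).sub
      (integrable_finset_sum _ fun k _ => hint k (fun i => (∑ j, M i j * z j) - z i))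
  -- conditional expectation of f z (n+1) :
  have hcond : ∀ (z : Fin N → ℝ) (n : ℕ),
      P[f z (n + 1)|𝒢 n] =ᵐ[P]
        P[(fun ω => z (X (n + 1) ω))|𝒢 n] +
          (fun ω => -(z (X 0 ω)) -
            ∑ k ∈ Finset.range (n + 1), ((∑ j, M (X k ω) j * z j) - z (X k ω))) := by
    intro z n
    rw [hsplit z n]
    refine (condExp_add (hint (n + 1) z) (hcInt z n) (𝒢 n)).trans ?_
    rw [condExp_of_stronglyMeasurable (𝒢.le n) (hcSM z n) (hcInt z n)]
  -- key equivalence: the martingale step for z is equivalent to the condexp identity for z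
  have hkey : ∀ (z : Fin N → ℝ) (n : ℕ),
      (P[f z (n + 1)|𝒢 n] =ᵐ[P] f z n) ↔
        (P[(fun ω => z (X (n + 1) ω))|𝒢 n] =ᵐ[P]
          fun ω => ∑ j, M (X n ω) j * z j) := by
    intro z n
    constructor
    · intro h
      filter_upwards [(hcond z n).symm.trans h] with ω hω
      simp only [Pi.add_apply, hfdef] at hω
      rw [Finset.sum_range_succ] at hω
      linarith
    · intro h
      refine (hcond z n).trans ?_
      filter_upwards [h] with ω hω
      simp only [Pi.add_apply, hω, hfdef]
      rw [Finset.sum_range_succ]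
      ring
  constructor
  · -- Markov ⇒ martingale
    intro h z
    refine martingale_nat ?_ ?_ ?_
    · intro n
      exact ((hG n z).sub ((hG 0 z).mono (𝒢.mono (Nat.zero_le n)))).sub
        (Finset.stronglyMeasurable_fun_sum _ fun k hk =>
          (hG k (fun i => (∑ j, M i j * z j) - z i)).mono
            (𝒢.mono (le_of_lt (Finset.mem_range.mp hk))))
    · intro n
      exact ((hint n z).sub (hint 0 z)).sub
        (integrable_finset_sum _ fun k _ => hint k (fun i => (∑ j, M i j * z j) - z i))
    · intro n
      refine ((hkey z n).mpr ?_).symm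
      -- compute P[z (X (n+1) ·)|𝒢 n]
      have hrep : (fun ω => z (X (n + 1) ω)) =
          ∑ i : Fin N, fun ω => z i • (if X (n + 1) ω = i then (1 : ℝ) else 0) := by
        funext ω
        simp [Finset.sum_apply, smul_eq_mul, mul_ite, mul_one, mul_zero]
      rw [hrep]
      have hintind : ∀ i ∈ Finset.univ, Integrable
          (fun ω => z i • (if X (n + 1) ω = i then (1 : ℝ) else 0)) P := by
        intro i _
        exact hint (n + 1) (fun j => z i • (if j = i then (1 : ℝ) else 0))
      refine (condExp_finsetSum hintind (𝒢 n)).trans ?_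
      have hall : ∀ᵐ ω ∂P, ∀ i : Fin N,
          (P[(fun ω => if X (n + 1) ω = i then (1 : ℝ) else 0)|𝒢 n]) ω = M (X n ω) i :=
        (ae_all_iff.mpr (h n))
      have hsm : ∀ i : Fin N,
          P[(fun ω => z i • (if X (n + 1) ω = i then (1 : ℝ) else 0))|𝒢 n] =ᵐ[P]
            z i • P[(fun ω => if X (n + 1) ω = i then (1 : ℝ) else 0)|𝒢 n] := by
        intro i
        exact condExp_smul (z i) (fun ω => if X (n + 1) ω = i then (1 : ℝ) else 0) (𝒢 n)
      have hsm' : ∀ᵐ ω ∂P, ∀ i : Fin N,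
          (P[(fun ω => z i • (if X (n + 1) ω = i then (1 : ℝ) else 0))|𝒢 n]) ω =
            z i • (P[(fun ω => if X (n + 1) ω = i then (1 : ℝ) else 0)|𝒢 n]) ω :=
        ae_all_iff.mpr hsm
      filter_upwards [hall, hsm'] with ω hω hω'
      simp only [Finset.sum_apply]
      calc ∑ i : Fin N, (P[(fun ω => z i • (if X (n + 1) ω = i then (1:ℝ) else 0))|𝒢 n]) ω
          = ∑ i : Fin N, z i * M (X n ω) i := by
            refine Finset.sum_congr rfl fun i _ => ?_
            rw [hω' i, hω i, smul_eq_mul]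
        _ = ∑ j, M (X n ω) j * z j := by
            exact Finset.sum_congr rfl fun i _ => mul_comm _ _
  · -- martingale ⇒ Markov
    intro h n i
    set z : Fin N → ℝ := fun j => if j = i then (1 : ℝ) else 0 with hz
    have hstep : P[f z (n + 1)|𝒢 n] =ᵐ[P] f z n :=
      (h z).condExp_ae_eq (Nat.le_succ n)
    have := (hkey z n).mp hstep
    have hzsum : ∀ a : Fin N, (∑ j, M a j * z j) = M a i := by
      intro a
      simp [hz, mul_ite, mul_one, mul_zero]
    refine Filter.EventuallyEq.trans ?_ (this.trans ?_)
    · rfl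
    · exact Filter.Eventually.of_forall fun ω => hzsum (X n ω)
end

section
/- Let N be a Poisson process with rate 1 and let T_1 < T_2 < … be its arrival times. For a fixed t > 0 and a measurable function λ : [0,t] → (0,∞) with ∫_0^t λ(s) ds < ∞, define Z = exp(∫_0^t (1 − λ(s)) ds + Σ_{n: T_n ≤ t} log λ(T_n)). Then E[Z] = 1. -/
open MeasureTheory Set ProbabilityTheory Filter Topology
open scoped ENNReal NNReal

section PoissonAux

variable {Ω : Type*} {m : MeasurableSpace Ω} {P : Measure Ω}
variable {N : ℝ → Ω → ℕ} {T : ℕ → Ω → ℝ}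

/-- Hitting-time characterization: `T k ω ≤ u ↔ k ≤ N u ω`. -/
lemma pp_hit (hmono : ∀ ω, Monotone fun t => N t ω)
    (hrc : ∀ ω t, ∃ ε > 0, ∀ s ∈ Ico t (t + ε), N s ω = N t ω)
    (hT : ∀ n ω, T n ω = sInf {u | 0 ≤ u ∧ n ≤ N u ω})
    {ω : Ω} {k : ℕ} (hne : ∃ v, 0 ≤ v ∧ k ≤ N v ω) :
    0 ≤ T k ω ∧ ∀ u, 0 ≤ u → (T k ω ≤ u ↔ k ≤ N u ω) := by
  set S := {u : ℝ | 0 ≤ u ∧ k ≤ N u ω} with hS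
  have hne' : S.Nonempty := hne
  have hbdd : BddBelow S := ⟨0, fun x hx => hx.1⟩
  have hTk : T k ω = sInf S := hT k ω
  have hr0 : 0 ≤ sInf S := le_csInf hne' fun x hx => hx.1
  have hmem : sInf S ∈ S := by
    obtain ⟨ε, hε, hc⟩ := hrc ω (sInf S)
    obtain ⟨v, hvS, hvlt⟩ := exists_lt_of_csInf_lt hne' (lt_add_of_pos_right _ hε)
    have hrv : sInf S ≤ v := csInf_le hbdd hvS
    have hNv : N v ω = N (sInf S) ω := hc v ⟨hrv, hvlt⟩
    exact ⟨hr0, hNv ▸ hvS.2⟩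
  constructor
  · rw [hTk]; exact hr0
  · intro u hu
    constructor
    · intro hle
      rw [hTk] at hle
      exact le_trans hmem.2 (hmono ω hle)
    · intro hle
      rw [hTk]
      exact csInf_le hbdd ⟨hu, hle⟩

/-- Arrival times with index in `[1, N t]` lie in `(0, t]`. -/
lemma pp_mem_Ioc (h0 : ∀ ω, N 0 ω = 0)
    (hmono : ∀ ω, Monotone fun t => N t ω)
    (hrc : ∀ ω t, ∃ ε > 0, ∀ s ∈ Ico t (t + ε), N s ω = N t ω)
    (hT : ∀ n ω, T n ω = sInf {u | 0 ≤ u ∧ n ≤ N u ω})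
    {ω : Ω} {k : ℕ} {t : ℝ} (ht : 0 ≤ t) (hk : 1 ≤ k) (hkN : k ≤ N t ω) :
    T k ω ∈ Ioc 0 t := by
  obtain ⟨hpos, hiff⟩ := pp_hit hmono hrc hT ⟨t, ht, hkN⟩
  refine ⟨?_, (hiff t ht).2 hkN⟩
  by_contra h
  push_neg at h
  have h2 := (hiff 0 le_rfl).1 h
  rw [h0 ω] at h2
  omega

/-- Modified arrival time, equal to `T k` on `{k ≤ N t}` and measurable. -/
noncomputable def ppArr (N : ℝ → Ω → ℕ) (T : ℕ → Ω → ℝ) (t : ℝ) (k : ℕ) (ω : Ω) : ℝ :=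
  if k ≤ N t ω then T k ω else t + 1

lemma pp_arr_meas (hmeas : ∀ t, Measurable (N t))
    (hmono : ∀ ω, Monotone fun t => N t ω)
    (hrc : ∀ ω t, ∃ ε > 0, ∀ s ∈ Ico t (t + ε), N s ω = N t ω)
    (hT : ∀ n ω, T n ω = sInf {u | 0 ≤ u ∧ n ≤ N u ω})
    {t : ℝ} (ht : 0 ≤ t) (k : ℕ) : Measurable (ppArr N T t k) := by
  apply measurable_of_Iic
  intro u
  by_cases hu : 0 ≤ u
  · have hset : ppArr N T t k ⁻¹' Iic u
        = ((N t ⁻¹' Ici k) ∩ (N u ⁻¹' Ici k)) ∪ ((N t ⁻¹' Ici k)ᶜ ∩ {ω | t + 1 ≤ u}) := by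
      ext ω
      simp only [ppArr, mem_preimage, mem_Iic, mem_union, mem_inter_iff, mem_Ici,
        mem_compl_iff, mem_setOf_eq, not_le]
      by_cases hk : k ≤ N t ω
      · obtain ⟨hpos, hiff⟩ := pp_hit hmono hrc hT ⟨t, ht, hk⟩
        simp [hk, hiff u hu, not_lt.2 hk]
      · simp [hk, if_neg hk, not_le.1 hk]
    rw [hset]
    exact (((hmeas t) measurableSet_Ici).inter ((hmeas u) measurableSet_Ici)).union
      (((hmeas t) measurableSet_Ici).compl.inter (MeasurableSet.const _))
  · have hset : ppArr N T t k ⁻¹' Iic u = ∅ := by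
      ext ω
      simp only [mem_preimage, mem_Iic, mem_empty_iff_false, iff_false, not_le]
      push_neg at hu
      unfold ppArr
      by_cases hk : k ≤ N t ω
      · obtain ⟨hpos, _⟩ := pp_hit hmono hrc hT ⟨t, ht, hk⟩
        rw [if_pos hk]
        linarith
      · rw [if_neg hk]
        linarith
    rw [hset]
    exact MeasurableSet.empty

/-- Telescoping sum of natural subtraction increments of a monotone sequence. -/
lemma pp_nat_telescope (a : ℕ → ℕ) (ha : Monotone a) (n : ℕ) :
    ∑ i ∈ Finset.range n, (a (i + 1) - a i) = a n - a 0 := by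
  induction n with
  | zero => simp
  | succ n ih =>
      rw [Finset.sum_range_succ, ih]
      have h1 := ha (Nat.zero_le n)
      have h2 := ha (show n ≤ n + 1 by omega)
      omega

/-- Pointwise identity: product of a step function over arrival times equals a product of
powers of increments. -/
lemma pp_blocks (h0 : ∀ ω, N 0 ω = 0)
    (hmono : ∀ ω, Monotone fun t => N t ω)
    (hrc : ∀ ω t, ∃ ε > 0, ∀ s ∈ Ico t (t + ε), N s ω = N t ω)
    (hT : ∀ n ω, T n ω = sInf {u | 0 ≤ u ∧ n ≤ N u ω})
    (ω : Ω) (mm : ℕ) (τ : ℕ → ℝ) (hτ : Monotone τ) (h00 : τ 0 = 0)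
    (f : ℝ → ℝ) (v : ℕ → ℝ)
    (hf : ∀ i < mm, ∀ s ∈ Ioc (τ i) (τ (i + 1)), f s = v i) :
    ∏ k ∈ Finset.Icc 1 (N (τ mm) ω), f (T k ω)
      = ∏ i ∈ Finset.range mm, (v i) ^ (N (τ (i + 1)) ω - N (τ i) ω) := by
  induction mm with
  | zero =>
      have : N (τ 0) ω = 0 := by rw [h00, h0 ω]
      simp [this]
  | succ n ih =>
      have hNle : N (τ n) ω ≤ N (τ (n + 1)) ω := hmono ω (hτ (Nat.le_succ n))
      have hsplit : Finset.Icc 1 (N (τ (n + 1)) ω)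
          = Finset.Icc 1 (N (τ n) ω) ∪ Finset.Ioc (N (τ n) ω) (N (τ (n + 1)) ω) := by
        ext x
        simp only [Finset.mem_Icc, Finset.mem_union, Finset.mem_Ioc]
        omega
      have hdisj : Disjoint (Finset.Icc 1 (N (τ n) ω))
          (Finset.Ioc (N (τ n) ω) (N (τ (n + 1)) ω)) := by
        rw [Finset.disjoint_left]
        intro x hx hx'
        rw [Finset.mem_Icc] at hx
        rw [Finset.mem_Ioc] at hx'
        omega
      rw [hsplit, Finset.prod_union hdisj, ih (fun i hi s hs => hf i (by omega) s hs),
        Finset.prod_range_succ]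
      congr 1
      have hval : ∀ k ∈ Finset.Ioc (N (τ n) ω) (N (τ (n + 1)) ω), f (T k ω) = v n := by
        intro k hk
        rw [Finset.mem_Ioc] at hk
        have hτn1 : (0:ℝ) ≤ τ (n + 1) := by rw [← h00]; exact hτ (Nat.zero_le _)
        have hτn : (0:ℝ) ≤ τ n := by rw [← h00]; exact hτ (Nat.zero_le _)
        obtain ⟨hpos, hiff⟩ := pp_hit hmono hrc hT ⟨τ (n + 1), hτn1, hk.2⟩
        have h1 : T k ω ≤ τ (n + 1) := (hiff _ hτn1).2 hk.2
        have h2 : ¬ T k ω ≤ τ n := by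
          intro hc
          have := (hiff _ hτn).1 hc
          omega
        exact hf n (by omega) _ ⟨lt_of_not_ge h2, h1⟩
      rw [Finset.prod_congr rfl hval, Finset.prod_const, Nat.card_Ioc]

/-- `∫⁻` of a product of independent `ℝ≥0∞`-valued random variables. -/
lemma pp_lintegral_prod {ι : Type*} [IsProbabilityMeasure P] {h : ι → Ω → ℝ≥0∞}
    (hi : iIndepFun h P) (hm : ∀ i, Measurable (h i)) (s : Finset ι) :
    ∫⁻ ω, ∏ i ∈ s, h i ω ∂P = ∏ i ∈ s, ∫⁻ ω, h i ω ∂P := by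
  classical
  induction s using Finset.cons_induction with
  | empty => simp
  | cons a s ha ih =>
      simp_rw [Finset.prod_cons]
      have hfn : (fun ω => ∏ i ∈ s, h i ω) = (∏ i ∈ s, h i) := by
        ext ω
        simp
      have hind : IndepFun (h a) (fun ω => ∏ i ∈ s, h i ω) P := by
        rw [hfn]
        exact (hi.indepFun_finset_prod_of_notMem hm ha).symm
      have hpm : Measurable fun ω => ∏ i ∈ s, h i ω :=
        Finset.measurable_prod s fun i _ => hm i
      have := lintegral_mul_eq_lintegral_mul_lintegral_of_indepFun (μ := P)
        (hm a) hpm hind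
      calc ∫⁻ ω, h a ω * ∏ i ∈ s, h i ω ∂P
          = ∫⁻ ω, (h a * fun ω => ∏ i ∈ s, h i ω) ω ∂P := by rfl
        _ = (∫⁻ ω, h a ω ∂P) * ∫⁻ ω, ∏ i ∈ s, h i ω ∂P := this
        _ = _ := by rw [ih]

/-- Poisson moment generating function for increments. -/
lemma pp_mgf [IsProbabilityMeasure P] (hmeas : ∀ t, Measurable (N t))
    (hpois : ∀ s t : ℝ, 0 ≤ s → s < t → ∀ k : ℕ,
      P {ω | N t ω - N s ω = k} =
        ENNReal.ofReal (Real.exp (-(t - s)) * (t - s) ^ k / k.factorial))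
    {a b : ℝ} (ha : 0 ≤ a) (hab : a ≤ b) {v : ℝ} (hv : 0 ≤ v) :
    ∫⁻ ω, ENNReal.ofReal (v ^ (N b ω - N a ω)) ∂P
      = ENNReal.ofReal (Real.exp ((b - a) * (v - 1))) := by
  rcases eq_or_lt_of_le hab with heq | hlt
  · subst heq
    simp [Nat.sub_self, Real.exp_zero]
  · set X : Ω → ℕ := fun ω => N b ω - N a ω with hX
    have hXm : Measurable X := (hmeas b).sub (hmeas a)
    have hmap : ∀ n : ℕ, P.map X {n}
        = ENNReal.ofReal (Real.exp (-(b - a)) * (b - a) ^ n / n.factorial) := by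
      intro n
      rw [Measure.map_apply hXm (measurableSet_singleton n)]
      have hpre : X ⁻¹' {n} = {ω | N b ω - N a ω = n} := by
        ext ω
        simp [hX]
      rw [hpre]
      exact hpois a b ha hlt n
    have hterm : ∀ n : ℕ, v ^ n * (Real.exp (-(b - a)) * (b - a) ^ n / n.factorial)
        = Real.exp (-(b - a)) * ((v * (b - a)) ^ n / n.factorial) := by
      intro n
      rw [mul_pow]
      ring
    have hsum : Summable fun n : ℕ =>
        v ^ n * (Real.exp (-(b - a)) * (b - a) ^ n / n.factorial) := by
      have := (Real.summable_pow_div_factorial (v * (b - a))).mul_left (Real.exp (-(b - a)))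
      exact this.congr fun n => (hterm n).symm
    calc ∫⁻ ω, ENNReal.ofReal (v ^ X ω) ∂P
        = ∫⁻ n, ENNReal.ofReal (v ^ n) ∂(P.map X) := by
          rw [lintegral_map (by exact measurable_from_top) hXm]
      _ = ∑' n : ℕ, ENNReal.ofReal (v ^ n) * P.map X {n} := lintegral_countable' _
      _ = ∑' n : ℕ, ENNReal.ofReal
            (v ^ n * (Real.exp (-(b - a)) * (b - a) ^ n / n.factorial)) := by
          refine tsum_congr fun n => ?_
          rw [hmap n, ← ENNReal.ofReal_mul (pow_nonneg hv n)]
      _ = ENNReal.ofReal (∑' n : ℕ,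
            v ^ n * (Real.exp (-(b - a)) * (b - a) ^ n / n.factorial)) := by
          rw [ENNReal.ofReal_tsum_of_nonneg (fun n => mul_nonneg (pow_nonneg hv n)
            (div_nonneg (mul_nonneg (Real.exp_nonneg _) (pow_nonneg (by linarith) n))
              (Nat.cast_nonneg _))) hsum]
      _ = ENNReal.ofReal (Real.exp ((b - a) * (v - 1))) := by
          congr 1
          rw [tsum_congr hterm, tsum_mul_left]
          have hexp : ∑' n : ℕ, (v * (b - a)) ^ n / n.factorial
              = Real.exp (v * (b - a)) := by
            rw [Real.exp_eq_exp_ℝ, NormedSpace.exp_eq_tsum_div]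
          rw [hexp, ← Real.exp_add]
          congr 1
          ring

/-- Poisson mean for increments. -/
lemma pp_mean [IsProbabilityMeasure P] (hmeas : ∀ t, Measurable (N t))
    (hpois : ∀ s t : ℝ, 0 ≤ s → s < t → ∀ k : ℕ,
      P {ω | N t ω - N s ω = k} =
        ENNReal.ofReal (Real.exp (-(t - s)) * (t - s) ^ k / k.factorial))
    {a b : ℝ} (ha : 0 ≤ a) (hab : a ≤ b) :
    ∫⁻ ω, ((N b ω - N a ω : ℕ) : ℝ≥0∞) ∂P = ENNReal.ofReal (b - a) := by
  rcases eq_or_lt_of_le hab with heq | hlt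
  · subst heq
    simp [Nat.sub_self]
  · set X : Ω → ℕ := fun ω => N b ω - N a ω with hX
    set Δ : ℝ := b - a with hΔ
    have hΔ0 : 0 < Δ := by simp [hΔ]; linarith
    have hXm : Measurable X := (hmeas b).sub (hmeas a)
    have hmap : ∀ n : ℕ, P.map X {n}
        = ENNReal.ofReal (Real.exp (-Δ) * Δ ^ n / n.factorial) := by
      intro n
      rw [Measure.map_apply hXm (measurableSet_singleton n)]
      have hpre : X ⁻¹' {n} = {ω | N b ω - N a ω = n} := by
        ext ω
        simp [hX]
      rw [hpre]
      exact hpois a b ha hlt n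
    have hshift : ∀ n : ℕ, ((n + 1 : ℕ) : ℝ) * (Real.exp (-Δ) * Δ ^ (n + 1) / (n + 1).factorial)
        = Real.exp (-Δ) * Δ * (Δ ^ n / n.factorial) := by
      intro n
      rw [Nat.factorial_succ, pow_succ]
      have h1 : (n.factorial : ℝ) ≠ 0 := Nat.cast_ne_zero.2 n.factorial_ne_zero
      have h2 : ((n : ℝ) + 1) ≠ 0 := by positivity
      push_cast
      field_simp
    have hsum : Summable fun n : ℕ => (n : ℝ) * (Real.exp (-Δ) * Δ ^ n / n.factorial) := by
      apply (summable_nat_add_iff 1).1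
      have := (Real.summable_pow_div_factorial Δ).mul_left (Real.exp (-Δ) * Δ)
      refine this.congr fun n => ?_
      exact (hshift n).symm
    have htsum : ∑' n : ℕ, (n : ℝ) * (Real.exp (-Δ) * Δ ^ n / n.factorial) = Δ := by
      rw [Summable.tsum_eq_zero_add hsum]
      simp only [Nat.cast_zero, zero_mul, zero_add]
      rw [tsum_congr hshift, tsum_mul_left]
      have hexp : ∑' n : ℕ, Δ ^ n / n.factorial = Real.exp Δ := by
        rw [Real.exp_eq_exp_ℝ, NormedSpace.exp_eq_tsum_div]
      rw [hexp]
      have hre : Real.exp (-Δ) * Δ * Real.exp Δ = (Real.exp (-Δ) * Real.exp Δ) * Δ := by ring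
      rw [hre, ← Real.exp_add]
      simp
    calc ∫⁻ ω, ((X ω : ℕ) : ℝ≥0∞) ∂P
        = ∫⁻ n, ((n : ℕ) : ℝ≥0∞) ∂(P.map X) := by
          rw [lintegral_map (by exact measurable_from_top) hXm]
      _ = ∑' n : ℕ, ((n : ℕ) : ℝ≥0∞) * P.map X {n} := lintegral_countable' _
      _ = ∑' n : ℕ, ENNReal.ofReal ((n : ℝ) * (Real.exp (-Δ) * Δ ^ n / n.factorial)) := by
          refine tsum_congr fun n => ?_
          rw [hmap n, ← ENNReal.ofReal_natCast n, ← ENNReal.ofReal_mul (by positivity)]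
      _ = ENNReal.ofReal (∑' n : ℕ, (n : ℝ) * (Real.exp (-Δ) * Δ ^ n / n.factorial)) := by
          rw [ENNReal.ofReal_tsum_of_nonneg (fun n => by positivity) hsum]
      _ = ENNReal.ofReal (b - a) := by rw [htsum]

/-- Expectation of the step-function product over arrival times. -/
lemma pp_step [IsProbabilityMeasure P] (hmeas : ∀ t, Measurable (N t))
    (h0 : ∀ ω, N 0 ω = 0)
    (hmono : ∀ ω, Monotone fun t => N t ω)
    (hrc : ∀ ω t, ∃ ε > 0, ∀ s ∈ Ico t (t + ε), N s ω = N t ω)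
    (hpois : ∀ s t : ℝ, 0 ≤ s → s < t → ∀ k : ℕ,
      P {ω | N t ω - N s ω = k} =
        ENNReal.ofReal (Real.exp (-(t - s)) * (t - s) ^ k / k.factorial))
    (hindep : ∀ (n : ℕ) (τ : ℕ → ℝ), Monotone τ →
      iIndepFun
        (fun (i : Fin n) ω => N (τ (i + 1)) ω - N (τ i) ω) P)
    (hT : ∀ n ω, T n ω = sInf {u | 0 ≤ u ∧ n ≤ N u ω})
    (mm : ℕ) (τ : ℕ → ℝ) (hτ : Monotone τ) (h00 : τ 0 = 0)
    (f : ℝ → ℝ) (v : ℕ → ℝ) (hv : ∀ i, 0 ≤ v i)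
    (hf : ∀ i < mm, ∀ s ∈ Ioc (τ i) (τ (i + 1)), f s = v i) :
    ∫⁻ ω, ENNReal.ofReal (∏ k ∈ Finset.Icc 1 (N (τ mm) ω), f (T k ω)) ∂P
      = ENNReal.ofReal
          (Real.exp (∑ i ∈ Finset.range mm, (τ (i + 1) - τ i) * (v i - 1))) := by
  have hτ0 : ∀ i, (0:ℝ) ≤ τ i := fun i => by rw [← h00]; exact hτ (Nat.zero_le i)
  have hrew : (fun ω => ENNReal.ofReal (∏ k ∈ Finset.Icc 1 (N (τ mm) ω), f (T k ω)))
      = fun ω => ∏ i : Fin mm, ENNReal.ofReal (v (i : ℕ) ^ (N (τ ((i : ℕ) + 1)) ω - N (τ (i : ℕ)) ω)) := by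
    funext ω
    rw [pp_blocks h0 hmono hrc hT ω mm τ hτ h00 f v hf,
      ENNReal.ofReal_prod_of_nonneg (fun i _ => pow_nonneg (hv i) _),
      ← Fin.prod_univ_eq_prod_range]
  rw [hrew]
  have hX := hindep mm τ hτ
  have hiid := hX.comp (fun (i : Fin mm) (n : ℕ) => ENNReal.ofReal (v (i : ℕ) ^ n))
      (fun i => measurable_from_top)
  have hmeasc : ∀ i : Fin mm, Measurable fun ω =>
      ENNReal.ofReal (v (i : ℕ) ^ (N (τ ((i : ℕ) + 1)) ω - N (τ (i : ℕ)) ω)) :=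
    fun i => Measurable.comp (g := fun n : ℕ => ENNReal.ofReal (v (i : ℕ) ^ n))
      measurable_from_top ((hmeas (τ ((i : ℕ) + 1))).sub (hmeas (τ (i : ℕ))))
  calc ∫⁻ ω, ∏ i : Fin mm, ENNReal.ofReal (v (i : ℕ) ^ (N (τ ((i : ℕ) + 1)) ω - N (τ (i : ℕ)) ω)) ∂P
      = ∏ i : Fin mm, ∫⁻ ω, ENNReal.ofReal (v (i : ℕ) ^ (N (τ ((i : ℕ) + 1)) ω - N (τ (i : ℕ)) ω)) ∂P :=
        pp_lintegral_prod hiid hmeasc Finset.univ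
    _ = ∏ i : Fin mm, ENNReal.ofReal (Real.exp ((τ ((i : ℕ) + 1) - τ (i : ℕ)) * (v (i : ℕ) - 1))) := by
        refine Finset.prod_congr rfl fun i _ => ?_
        exact pp_mgf hmeas hpois (hτ0 (i : ℕ)) (hτ (Nat.le_succ (i : ℕ))) (hv (i : ℕ))
    _ = ENNReal.ofReal (Real.exp (∑ i ∈ Finset.range mm, (τ (i + 1) - τ i) * (v i - 1))) := by
        rw [Fin.prod_univ_eq_prod_range
            (fun i => ENNReal.ofReal (Real.exp ((τ (i + 1) - τ i) * (v i - 1)))) mm,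
          ← ENNReal.ofReal_prod_of_nonneg (fun i _ => Real.exp_nonneg _), ← Real.exp_sum]

/-- A monotone partition covers `Ioc (τ 0) (τ n)`. -/
lemma pp_Ioc_union (τ : ℕ → ℝ) (hτ : Monotone τ) (n : ℕ) :
    Ioc (τ 0) (τ n) = ⋃ i ∈ Finset.range n, Ioc (τ i) (τ (i + 1)) := by
  induction n with
  | zero => simp
  | succ j ihj =>
      rw [Finset.range_add_one]
      simp only [Finset.mem_insert, iUnion_iUnion_eq_or_left]
      rw [← ihj, union_comm, Ioc_union_Ioc_eq_Ioc (hτ (Nat.zero_le j)) (hτ (Nat.le_succ j))]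

/-- Integral of a step function over the union of its blocks. -/
lemma pp_stepint (mm : ℕ) (τ : ℕ → ℝ) (hτ : Monotone τ)
    (f : ℝ → ℝ) (v : ℕ → ℝ)
    (hf : ∀ i < mm, ∀ s ∈ Ioc (τ i) (τ (i + 1)), f s = v i) :
    ∫ s in Ioc (τ 0) (τ mm), f s = ∑ i ∈ Finset.range mm, v i * (τ (i + 1) - τ i) := by
  have hblock : ∀ i < mm, IntegrableOn f (Ioc (τ i) (τ (i + 1))) := by
    intro i hi
    have hconst : EqOn f (fun _ => v i) (Ioc (τ i) (τ (i + 1))) := fun s hs => hf i hi s hs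
    exact (integrableOn_congr_fun hconst measurableSet_Ioc).2
      (integrableOn_const measure_Ioc_lt_top.ne)
  induction mm with
  | zero => simp
  | succ n ih =>
      have hτn : τ 0 ≤ τ n := hτ (Nat.zero_le n)
      have hτn1 : τ n ≤ τ (n + 1) := hτ (Nat.le_succ n)
      have hsplit : Ioc (τ 0) (τ (n + 1)) = Ioc (τ 0) (τ n) ∪ Ioc (τ n) (τ (n + 1)) :=
        (Ioc_union_Ioc_eq_Ioc hτn hτn1).symm
      have hun : Ioc (τ 0) (τ n) = ⋃ i ∈ Finset.range n, Ioc (τ i) (τ (i + 1)) :=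
        pp_Ioc_union τ hτ n
      have hint1 : IntegrableOn f (Ioc (τ 0) (τ n)) := by
        rw [hun]
        rw [integrableOn_finset_iUnion]
        intro i hi
        exact hblock i (by rw [Finset.mem_range] at hi; omega)
      have hint2 : IntegrableOn f (Ioc (τ n) (τ (n + 1))) := hblock n (by omega)
      have hdisj : Disjoint (Ioc (τ 0) (τ n)) (Ioc (τ n) (τ (n + 1))) := Ioc_disjoint_Ioc_of_le le_rfl
      rw [hsplit, setIntegral_union hdisj measurableSet_Ioc hint1 hint2,
        ih (fun i hi s hs => hf i (by omega) s hs) (fun i hi => hblock i (by omega)),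
        Finset.sum_range_succ]
      congr 1
      have hconst : EqOn f (fun _ => v n) (Ioc (τ n) (τ (n + 1))) := fun s hs => hf n (by omega) s hs
      rw [setIntegral_congr_fun measurableSet_Ioc hconst, setIntegral_const, measureReal_def, Real.volume_Ioc,
        ENNReal.toReal_ofReal (by linarith), smul_eq_mul, mul_comm]

/-- The intensity measure of the point process on `(0, t]` is Lebesgue measure. -/
lemma pp_nu [IsProbabilityMeasure P] (hmeas : ∀ t, Measurable (N t))
    (h0 : ∀ ω, N 0 ω = 0)
    (hmono : ∀ ω, Monotone fun t => N t ω)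
    (hrc : ∀ ω t, ∃ ε > 0, ∀ s ∈ Ico t (t + ε), N s ω = N t ω)
    (hpois : ∀ s t : ℝ, 0 ≤ s → s < t → ∀ k : ℕ,
      P {ω | N t ω - N s ω = k} =
        ENNReal.ofReal (Real.exp (-(t - s)) * (t - s) ^ k / k.factorial))
    (hT : ∀ n ω, T n ω = sInf {u | 0 ≤ u ∧ n ≤ N u ω})
    {t : ℝ} (ht : 0 < t) :
    (Measure.sum fun k : ℕ =>
        (P.restrict {ω | k + 1 ≤ N t ω}).map (ppArr N T t (k + 1)))
      = volume.restrict (Ioc 0 t) := by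
  have harr : ∀ k : ℕ, Measurable (ppArr N T t (k + 1)) :=
    fun k => pp_arr_meas hmeas hmono hrc hT ht.le _
  have hev : ∀ k : ℕ, MeasurableSet {ω | k + 1 ≤ N t ω} :=
    fun k => measurableSet_le measurable_const (hmeas t)
  have key : ∀ a b : ℝ, a < b →
      (Measure.sum fun k : ℕ =>
        (P.restrict {ω | k + 1 ≤ N t ω}).map (ppArr N T t (k + 1))) (Ioc a b)
      = (volume.restrict (Ioc 0 t)) (Ioc a b) := by
    intro a b hab
    set a1 : ℝ := min (max a 0) t with ha1def
    set b1 : ℝ := min (max b 0) t with hb1def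
    have ha10 : 0 ≤ a1 := le_min (le_max_right a 0) ht.le
    have hb10 : 0 ≤ b1 := le_min (le_max_right b 0) ht.le
    have ha1t : a1 ≤ t := min_le_right _ _
    have hb1t : b1 ≤ t := min_le_right _ _
    have hab1 : a1 ≤ b1 := min_le_min (max_le_max hab.le le_rfl) le_rfl
    have hSm : ∀ k : ℕ, MeasurableSet {ω | N a1 ω ≤ k ∧ k + 1 ≤ N b1 ω} := fun k =>
      (measurableSet_le (hmeas a1) measurable_const).inter
        (measurableSet_le measurable_const (hmeas b1))
    have hsetk : ∀ k : ℕ, (ppArr N T t (k + 1)) ⁻¹' (Ioc a b) ∩ {ω | k + 1 ≤ N t ω}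
        = {ω | N a1 ω ≤ k ∧ k + 1 ≤ N b1 ω} := by
      intro k
      ext ω
      simp only [mem_inter_iff, mem_preimage, mem_Ioc, mem_setOf_eq]
      constructor
      · rintro ⟨⟨haT, hTb⟩, hk⟩
        rw [ppArr, if_pos hk] at haT hTb
        have hTIoc := pp_mem_Ioc h0 hmono hrc hT ht.le (by omega) hk
        obtain ⟨hpos, hiff⟩ := pp_hit hmono hrc hT ⟨t, ht.le, hk⟩
        have hTb1 : T (k + 1) ω ≤ b1 := le_min (le_max_of_le_left hTb) hTIoc.2
        have hTa1 : a1 < T (k + 1) ω :=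
          lt_of_le_of_lt (min_le_left _ _) (max_lt_iff.2 ⟨haT, hTIoc.1⟩)
        have h1 : ¬ (k + 1 ≤ N a1 ω) := by
          intro hc
          exact absurd ((hiff a1 ha10).2 hc) (not_le.2 hTa1)
        have h2 : k + 1 ≤ N b1 ω := (hiff b1 hb10).1 hTb1
        exact ⟨by omega, h2⟩
      · rintro ⟨hNa, hNb⟩
        have hk : k + 1 ≤ N t ω := le_trans hNb (hmono ω hb1t)
        obtain ⟨hpos, hiff⟩ := pp_hit hmono hrc hT ⟨t, ht.le, hk⟩
        have hTIoc := pp_mem_Ioc h0 hmono hrc hT ht.le (by omega) hk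
        have hTb1 : T (k + 1) ω ≤ b1 := (hiff b1 hb10).2 hNb
        have hTa1 : a1 < T (k + 1) ω := by
          by_contra hc
          push_neg at hc
          have := (hiff a1 ha10).1 hc
          omega
        refine ⟨⟨?_, ?_⟩, hk⟩
        · rw [ppArr, if_pos hk]
          rcases le_or_gt (max a 0) t with hmt | hmt
          · rw [ha1def, min_eq_left hmt] at hTa1
            exact lt_of_le_of_lt (le_max_left a 0) hTa1
          · rw [ha1def, min_eq_right hmt.le] at hTa1
            exact absurd hTIoc.2 (not_le.2 hTa1)
        · rw [ppArr, if_pos hk]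
          rcases le_or_gt 0 b with hb | hb
          · have : b1 ≤ max b 0 := min_le_left _ _
            rw [max_eq_left hb] at this
            exact le_trans hTb1 this
          · exfalso
            have hb1z : b1 = 0 := by
              rw [hb1def, max_eq_right hb.le, min_eq_left ht.le]
            rw [hb1z] at hTb1
            exact absurd hTIoc.1 (not_lt.2 hTb1)
    calc (Measure.sum fun k : ℕ =>
            (P.restrict {ω | k + 1 ≤ N t ω}).map (ppArr N T t (k + 1))) (Ioc a b)
        = ∑' k : ℕ, ((P.restrict {ω | k + 1 ≤ N t ω}).map (ppArr N T t (k + 1))) (Ioc a b) :=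
          Measure.sum_apply _ measurableSet_Ioc
      _ = ∑' k : ℕ, P {ω | N a1 ω ≤ k ∧ k + 1 ≤ N b1 ω} := by
          refine tsum_congr fun k => ?_
          rw [Measure.map_apply (harr k) measurableSet_Ioc,
            Measure.restrict_apply' (hev k), hsetk k]
      _ = ∫⁻ ω, ((N b1 ω - N a1 ω : ℕ) : ℝ≥0∞) ∂P := by
          calc ∑' k : ℕ, P {ω | N a1 ω ≤ k ∧ k + 1 ≤ N b1 ω}
              = ∑' k : ℕ, ∫⁻ ω,
                  ({ω | N a1 ω ≤ k ∧ k + 1 ≤ N b1 ω}).indicator (1 : Ω → ℝ≥0∞) ω ∂P := by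
                refine tsum_congr fun k => ?_
                rw [lintegral_indicator_one (hSm k)]
            _ = ∫⁻ ω, ∑' k : ℕ,
                  ({ω | N a1 ω ≤ k ∧ k + 1 ≤ N b1 ω}).indicator (1 : Ω → ℝ≥0∞) ω ∂P :=
                (lintegral_tsum fun k =>
                  ((measurable_one.indicator (hSm k)).aemeasurable)).symm
            _ = ∫⁻ ω, ((N b1 ω - N a1 ω : ℕ) : ℝ≥0∞) ∂P := by
                refine lintegral_congr fun ω => ?_
                have hind : ∀ k : ℕ,
                    ({ω | N a1 ω ≤ k ∧ k + 1 ≤ N b1 ω}).indicator (1 : Ω → ℝ≥0∞) ω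
                    = if k ∈ Finset.Ico (N a1 ω) (N b1 ω) then 1 else 0 := by
                  intro k
                  by_cases hkin : N a1 ω ≤ k ∧ k + 1 ≤ N b1 ω
                  · rw [Set.indicator_of_mem
                        (show ω ∈ {ω | N a1 ω ≤ k ∧ k + 1 ≤ N b1 ω} from hkin)
                        (1 : Ω → ℝ≥0∞),
                      if_pos (Finset.mem_Ico.2 ⟨hkin.1, by omega⟩)]
                    rfl
                  · rw [Set.indicator_of_notMem
                        (show ω ∉ {ω | N a1 ω ≤ k ∧ k + 1 ≤ N b1 ω} from hkin)
                        (1 : Ω → ℝ≥0∞), if_neg (fun hc => by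
                      rw [Finset.mem_Ico] at hc
                      exact hkin ⟨hc.1, by omega⟩)]
                rw [tsum_congr hind,
                  tsum_eq_sum (s := Finset.Ico (N a1 ω) (N b1 ω)) (fun k hk => if_neg hk),
                  Finset.sum_congr rfl (fun k hk => if_pos hk), Finset.sum_const,
                  Nat.card_Ico, nsmul_eq_mul, mul_one]
      _ = ENNReal.ofReal (b1 - a1) := pp_mean hmeas hpois ha10 hab1
      _ = (volume.restrict (Ioc 0 t)) (Ioc a b) := by
          rw [Measure.restrict_apply' measurableSet_Ioc, Set.Ioc_inter_Ioc, Real.volume_Ioc]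
          rcases le_or_gt b 0 with hb | hb
          · have hb1z : b1 = 0 := by rw [hb1def, max_eq_right hb, min_eq_left ht.le]
            have ha1z : a1 = 0 := by
              rw [ha1def, max_eq_right (by linarith), min_eq_left ht.le]
            rw [hb1z, ha1z, ENNReal.ofReal_eq_zero.2 (by linarith), eq_comm,
              ENNReal.ofReal_eq_zero]
            linarith [min_le_left b t, le_max_right a 0]
          · have hb1e : b1 = min b t := by rw [hb1def, max_eq_left hb.le]
            rcases le_or_gt a 0 with ha | ha
            · have ha1e : a1 = 0 := by rw [ha1def, max_eq_right ha, min_eq_left ht.le]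
              rw [hb1e, ha1e, max_eq_right ha]
            · have hmax : max a 0 = a := max_eq_left ha.le
              rcases lt_or_ge a t with hat | hat
              · have ha1e : a1 = a := by rw [ha1def, hmax, min_eq_left hat.le]
                rw [hb1e, ha1e, hmax]
              · have ha1e : a1 = t := by rw [ha1def, hmax, min_eq_right hat]
                rw [hb1e, ha1e, hmax, ENNReal.ofReal_eq_zero.2
                  (by linarith [min_le_right b t]), eq_comm, ENNReal.ofReal_eq_zero]
                linarith [min_le_right b t]
  refine Measure.ext_of_Ioc' _ _ ?_ ?_
  · intro a b hab
    rw [key a b hab, Measure.restrict_apply' measurableSet_Ioc]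
    exact ne_of_lt (lt_of_le_of_lt (measure_mono inter_subset_left) measure_Ioc_lt_top)
  · intro a b hab
    exact key a b hab

/-- Arrival times up to `t` a.s. avoid any Lebesgue-null set. -/
lemma pp_null [IsProbabilityMeasure P] (hmeas : ∀ t, Measurable (N t))
    (h0 : ∀ ω, N 0 ω = 0)
    (hmono : ∀ ω, Monotone fun t => N t ω)
    (hrc : ∀ ω t, ∃ ε > 0, ∀ s ∈ Ico t (t + ε), N s ω = N t ω)
    (hpois : ∀ s t : ℝ, 0 ≤ s → s < t → ∀ k : ℕ,
      P {ω | N t ω - N s ω = k} =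
        ENNReal.ofReal (Real.exp (-(t - s)) * (t - s) ^ k / k.factorial))
    (hT : ∀ n ω, T n ω = sInf {u | 0 ≤ u ∧ n ≤ N u ω})
    {t : ℝ} (ht : 0 < t) {A : Set ℝ} (hA : MeasurableSet A)
    (hA0 : volume (A ∩ Ioc 0 t) = 0) :
    ∀ᵐ ω ∂P, ∀ k, 1 ≤ k → k ≤ N t ω → T k ω ∉ A := by
  have harr : ∀ k : ℕ, Measurable (ppArr N T t (k + 1)) :=
    fun k => pp_arr_meas hmeas hmono hrc hT ht.le _
  have hev : ∀ k : ℕ, MeasurableSet {ω | k + 1 ≤ N t ω} :=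
    fun k => measurableSet_le measurable_const (hmeas t)
  have hν := pp_nu hmeas h0 hmono hrc hpois hT ht (P := P)
  have hA'm : MeasurableSet (A ∩ Ioc 0 t) := hA.inter measurableSet_Ioc
  have hsum0 : (Measure.sum fun k : ℕ =>
      (P.restrict {ω | k + 1 ≤ N t ω}).map (ppArr N T t (k + 1))) (A ∩ Ioc 0 t) = 0 := by
    rw [hν, Measure.restrict_apply' measurableSet_Ioc]
    refine measure_mono_null ?_ hA0
    exact inter_subset_left.trans subset_rfl |>.trans (by intro x hx; exact hx) |>.trans subset_rfl
  rw [Measure.sum_apply _ hA'm, ENNReal.tsum_eq_zero] at hsum0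
  have hk0 : ∀ k : ℕ, P ({ω | T (k + 1) ω ∈ A} ∩ {ω | k + 1 ≤ N t ω}) = 0 := by
    intro k
    have h1 := hsum0 k
    rw [Measure.map_apply (harr k) hA'm, Measure.restrict_apply' (hev k)] at h1
    refine measure_mono_null ?_ h1
    rintro ω ⟨hTA, hk⟩
    refine ⟨?_, hk⟩
    rw [mem_preimage, ppArr, if_pos (show k + 1 ≤ N t ω from hk)]
    exact ⟨hTA, pp_mem_Ioc h0 hmono hrc hT ht.le (by omega) hk⟩
  have hU : P (⋃ k : ℕ, {ω | T (k + 1) ω ∈ A} ∩ {ω | k + 1 ≤ N t ω}) = 0 :=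
    measure_iUnion_null hk0
  rw [ae_iff]
  refine measure_mono_null ?_ hU
  intro ω hω
  simp only [mem_setOf_eq, not_forall] at hω
  obtain ⟨k, hk1, hkN, hTA⟩ := hω
  rw [not_not] at hTA
  refine mem_iUnion.2 ⟨k - 1, ?_, ?_⟩
  · simp only [mem_setOf_eq]
    rw [Nat.sub_add_cancel hk1]
    exact hTA
  · simp only [mem_setOf_eq]
    rw [Nat.sub_add_cancel hk1]
    exact hkN

/-- Measurability of the product functional. -/
lemma pp_measprod (hmeas : ∀ t, Measurable (N t))
    (hmono : ∀ ω, Monotone fun t => N t ω)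
    (hrc : ∀ ω t, ∃ ε > 0, ∀ s ∈ Ico t (t + ε), N s ω = N t ω)
    (hT : ∀ n ω, T n ω = sInf {u | 0 ≤ u ∧ n ≤ N u ω})
    {t : ℝ} (ht : 0 ≤ t) {f : ℝ → ℝ} (hf : Measurable f) :
    Measurable fun ω => ∏ k ∈ Finset.Icc 1 (N t ω), f (T k ω) := by
  have harr : ∀ k, Measurable (ppArr N T t k) := fun k => pp_arr_meas hmeas hmono hrc hT ht k
  have heq : (fun ω => ∏ k ∈ Finset.Icc 1 (N t ω), f (T k ω))
      = fun ω => ∏ k ∈ Finset.Icc 1 (N t ω), f (ppArr N T t k ω) := by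
    funext ω
    refine Finset.prod_congr rfl fun k hk => ?_
    rw [Finset.mem_Icc] at hk
    rw [ppArr, if_pos hk.2]
  rw [heq]
  have hF : ∀ n : ℕ, Measurable fun ω => ∏ k ∈ Finset.Icc 1 n, f (ppArr N T t k ω) :=
    fun n => Finset.measurable_prod _ fun k _ => hf.comp (harr k)
  have hcomp : (fun ω => ∏ k ∈ Finset.Icc 1 (N t ω), f (ppArr N T t k ω))
      = (fun p : Ω × ℕ => ∏ k ∈ Finset.Icc 1 p.2, f (ppArr N T t k p.1))
          ∘ (fun ω => (ω, N t ω)) := rfl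
  rw [hcomp]
  have hpm : Measurable fun ω : Ω => (ω, N t ω) := measurable_id.prodMk (hmeas t)
  exact Measurable.comp
    (measurable_from_prod_countable_left
      (f := fun p : Ω × ℕ => ∏ k ∈ Finset.Icc 1 p.2, f (ppArr N T t k p.1))
      fun n => hF n) hpm

/-- The product functional for continuous bounded intensities. -/
lemma pp_cont [IsProbabilityMeasure P] (hmeas : ∀ t, Measurable (N t))
    (h0 : ∀ ω, N 0 ω = 0)
    (hmono : ∀ ω, Monotone fun t => N t ω)
    (hrc : ∀ ω t, ∃ ε > 0, ∀ s ∈ Ico t (t + ε), N s ω = N t ω)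
    (hpois : ∀ s t : ℝ, 0 ≤ s → s < t → ∀ k : ℕ,
      P {ω | N t ω - N s ω = k} =
        ENNReal.ofReal (Real.exp (-(t - s)) * (t - s) ^ k / k.factorial))
    (hindep : ∀ (n : ℕ) (τ : ℕ → ℝ), Monotone τ →
      iIndepFun
        (fun (i : Fin n) ω => N (τ (i + 1)) ω - N (τ i) ω) P)
    (hT : ∀ n ω, T n ω = sInf {u | 0 ≤ u ∧ n ≤ N u ω})
    {t : ℝ} (ht : 0 < t) {g : ℝ → ℝ} (hg : Continuous g) {B : ℝ}
    (hg0 : ∀ s, 0 ≤ g s) (hgB : ∀ s, g s ≤ B) :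
    ∫⁻ ω, ENNReal.ofReal (∏ k ∈ Finset.Icc 1 (N t ω), g (T k ω)) ∂P
      = ENNReal.ofReal (Real.exp ((∫ s in Ioc (0 : ℝ) t, g s) - t)) := by
  have hB0 : (0:ℝ) ≤ B := le_trans (hg0 0) (hgB 0)
  set B' : ℝ := max B 1 with hB'def
  have hB'0 : (0:ℝ) ≤ B' := le_trans hB0 (le_max_left _ _)
  have hgB' : ∀ s, g s ≤ B' := fun s => le_trans (hgB s) (le_max_left _ _)
  set τ : ℕ → ℕ → ℝ := fun n i => (i : ℝ) * t / ((n : ℝ) + 1) with hτdef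
  have hn1pos : ∀ n : ℕ, (0:ℝ) < (n : ℝ) + 1 := fun n => by positivity
  have hτmono : ∀ n, Monotone (τ n) := by
    intro n i j hij
    have hc : (i:ℝ) ≤ (j:ℝ) := Nat.cast_le.2 hij
    exact (div_le_div_iff_of_pos_right (hn1pos n)).2 (mul_le_mul_of_nonneg_right hc ht.le)
  have hτ0 : ∀ n, τ n 0 = 0 := by
    intro n
    simp [hτdef]
  have hτtop : ∀ n, τ n (n + 1) = t := by
    intro n
    have : ((n:ℝ) + 1) ≠ 0 := ne_of_gt (hn1pos n)
    simp only [hτdef]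
    push_cast
    exact mul_div_cancel_left₀ t this
  set c : ℕ → ℝ → ℝ := fun n s => ((⌈s * ((n:ℝ) + 1) / t⌉ : ℤ) : ℝ) * t / ((n:ℝ) + 1)
    with hcdef
  set fn : ℕ → ℝ → ℝ := fun n s => g (c n s) with hfndef
  set v : ℕ → ℕ → ℝ := fun n i => g (τ n (i + 1)) with hvdef
  have hfnmeas : ∀ n, Measurable (fn n) := by
    intro n
    have hinner : Measurable (c n) := by
      apply Measurable.div_const
      apply Measurable.mul_const
      exact measurable_from_top.comp
        (Int.measurable_ceil.comp ((measurable_id.mul_const _).div_const _))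
    exact hg.measurable.comp hinner
  have hmatch : ∀ n, ∀ i < n + 1, ∀ s ∈ Ioc (τ n i) (τ n (i + 1)), fn n s = v n i := by
    intro n i _ s hs
    obtain ⟨hs1, hs2⟩ := hs
    have h1 : (i : ℝ) * t < s * ((n:ℝ) + 1) := by
      have := hs1
      rw [hτdef] at this
      exact (div_lt_iff₀ (hn1pos n)).1 this
    have h2 : s * ((n:ℝ) + 1) ≤ ((i:ℝ) + 1) * t := by
      have := hs2
      rw [hτdef] at this
      have h' := (le_div_iff₀ (hn1pos n)).1 this
      push_cast at h'
      linarith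
    have hceil : ⌈s * ((n:ℝ) + 1) / t⌉ = (i : ℤ) + 1 := by
      rw [Int.ceil_eq_iff]
      constructor
      · push_cast
        rw [lt_div_iff₀ ht]
        linarith
      · push_cast
        rw [div_le_iff₀ ht]
        linarith
    show g (c n s) = g (τ n (i + 1))
    congr 1
    rw [hcdef, hτdef]
    simp only
    rw [hceil]
    push_cast
    ring
  have hkey : ∀ n : ℕ,
      ∫⁻ ω, ENNReal.ofReal (∏ k ∈ Finset.Icc 1 (N t ω), fn n (T k ω)) ∂P
        = ENNReal.ofReal (Real.exp ((∫ s in Ioc (0:ℝ) t, fn n s) - t)) := by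
    intro n
    have hstep := pp_step hmeas h0 hmono hrc hpois hindep hT (n + 1) (τ n) (hτmono n) (hτ0 n)
      (fn n) (v n) (fun i => hg0 _) (hmatch n)
    rw [hτtop n] at hstep
    rw [hstep]
    congr 2
    have hsi := pp_stepint (n + 1) (τ n) (hτmono n) (fn n) (v n) (hmatch n)
    rw [hτ0 n, hτtop n] at hsi
    have htel : ∑ i ∈ Finset.range (n + 1), (τ n (i + 1) - τ n i) = t := by
      rw [Finset.sum_range_sub (τ n), hτ0 n, hτtop n, sub_zero]
    rw [hsi]
    nth_rewrite 1 [← htel]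
    rw [← Finset.sum_sub_distrib]
    refine Finset.sum_congr rfl fun i _ => ?_
    ring
  have hFmeas : ∀ n, Measurable fun ω =>
      ENNReal.ofReal (∏ k ∈ Finset.Icc 1 (N t ω), fn n (T k ω)) :=
    fun n => ENNReal.measurable_ofReal.comp
      (pp_measprod hmeas hmono hrc hT ht.le (hfnmeas n))
  have hdom : ∀ n ω, ENNReal.ofReal (∏ k ∈ Finset.Icc 1 (N t ω), fn n (T k ω))
      ≤ ENNReal.ofReal (B' ^ (N t ω)) := by
    intro n ω
    apply ENNReal.ofReal_le_ofReal
    have hblocks := pp_blocks h0 hmono hrc hT ω (n + 1) (τ n) (hτmono n) (hτ0 n)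
      (fn n) (v n) (hmatch n)
    rw [hτtop n] at hblocks
    rw [hblocks]
    calc ∏ i ∈ Finset.range (n + 1), v n i ^ (N (τ n (i + 1)) ω - N (τ n i) ω)
        ≤ ∏ i ∈ Finset.range (n + 1), B' ^ (N (τ n (i + 1)) ω - N (τ n i) ω) := by
          apply Finset.prod_le_prod
          · intro i _
            exact pow_nonneg (hg0 _) _
          · intro i _
            exact pow_le_pow_left₀ (hg0 _) (hgB' _) _
      _ = B' ^ (∑ i ∈ Finset.range (n + 1), (N (τ n (i + 1)) ω - N (τ n i) ω)) :=
          Finset.prod_pow_eq_pow_sum _ _ _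
      _ = B' ^ (N t ω) := by
          rw [pp_nat_telescope (fun i => N (τ n i) ω)
            (fun i j hij => hmono ω (hτmono n hij)) (n + 1)]
          rw [hτtop n, hτ0 n, h0 ω, Nat.sub_zero]
  have hbound : ∫⁻ ω, ENNReal.ofReal (B' ^ (N t ω)) ∂P ≠ ∞ := by
    have hmg := pp_mgf hmeas hpois (le_refl (0:ℝ)) ht.le hB'0 (P := P)
    have hrw : (fun ω => ENNReal.ofReal (B' ^ (N t ω - N 0 ω)))
        = fun ω => ENNReal.ofReal (B' ^ (N t ω)) := by
      funext ω
      rw [h0 ω, Nat.sub_zero]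
    rw [hrw] at hmg
    rw [hmg]
    exact ENNReal.ofReal_ne_top
  have hconv : ∀ s : ℝ, s ∈ Ioc 0 t → Tendsto (fun n => fn n s) atTop (𝓝 (g s)) := by
    intro s hs
    have hcs : Tendsto (fun n => c n s) atTop (𝓝 s) := by
      have hlb : ∀ n : ℕ, s ≤ c n s := by
        intro n
        have h1 : s * ((n:ℝ) + 1) / t ≤ ((⌈s * ((n:ℝ) + 1) / t⌉ : ℤ) : ℝ) := Int.le_ceil _
        have h2 : s * ((n:ℝ) + 1) / t * t / ((n:ℝ) + 1)
            ≤ ((⌈s * ((n:ℝ) + 1) / t⌉ : ℤ) : ℝ) * t / ((n:ℝ) + 1) := by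
          gcongr
        have h3 : s * ((n:ℝ) + 1) / t * t / ((n:ℝ) + 1) = s := by
          field_simp
        rw [h3] at h2
        exact h2
      have hub : ∀ n : ℕ, c n s ≤ s + t / ((n:ℝ) + 1) := by
        intro n
        have h1 : ((⌈s * ((n:ℝ) + 1) / t⌉ : ℤ) : ℝ) ≤ s * ((n:ℝ) + 1) / t + 1 :=
          (Int.ceil_lt_add_one _).le
        have h2 : ((⌈s * ((n:ℝ) + 1) / t⌉ : ℤ) : ℝ) * t / ((n:ℝ) + 1)
            ≤ (s * ((n:ℝ) + 1) / t + 1) * t / ((n:ℝ) + 1) := by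
          gcongr
        have h3 : (s * ((n:ℝ) + 1) / t + 1) * t / ((n:ℝ) + 1) = s + t / ((n:ℝ) + 1) := by
          field_simp
        rw [h3] at h2
        exact h2
      have hden : Tendsto (fun n : ℕ => t / ((n:ℝ) + 1)) atTop (𝓝 0) := by
        apply Tendsto.div_atTop tendsto_const_nhds
        exact tendsto_atTop_add_const_right atTop 1 tendsto_natCast_atTop_atTop
      have hup : Tendsto (fun n : ℕ => s + t / ((n:ℝ) + 1)) atTop (𝓝 s) := by
        simpa using tendsto_const_nhds.add hden
      exact tendsto_of_tendsto_of_tendsto_of_le_of_le tendsto_const_nhds hup hlb hub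
    exact ((hg.tendsto s).comp hcs : _)
  have hprod : ∀ ω, Tendsto
      (fun n => ENNReal.ofReal (∏ k ∈ Finset.Icc 1 (N t ω), fn n (T k ω)))
      atTop (𝓝 (ENNReal.ofReal (∏ k ∈ Finset.Icc 1 (N t ω), g (T k ω)))) := by
    intro ω
    apply (ENNReal.continuous_ofReal.tendsto _).comp
    apply tendsto_finset_prod
    intro k hk
    rw [Finset.mem_Icc] at hk
    exact hconv _ (pp_mem_Ioc h0 hmono hrc hT ht.le hk.1 hk.2)
  have hLHS := tendsto_lintegral_of_dominated_convergence (μ := P)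
    (fun ω => ENNReal.ofReal (B' ^ (N t ω))) hFmeas
    (fun n => Eventually.of_forall (hdom n)) hbound (Eventually.of_forall hprod)
  haveI : IsFiniteMeasure (volume.restrict (Ioc (0:ℝ) t)) :=
    ⟨by rw [Measure.restrict_apply_univ]; exact measure_Ioc_lt_top⟩
  have hint : Tendsto (fun n => ∫ s in Ioc (0:ℝ) t, fn n s) atTop
      (𝓝 (∫ s in Ioc (0:ℝ) t, g s)) := by
    apply tendsto_integral_of_dominated_convergence (fun _ => B')
    · intro n
      exact (hfnmeas n).aestronglyMeasurable
    · exact integrable_const _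
    · intro n
      refine Eventually.of_forall fun s => ?_
      rw [Real.norm_eq_abs, abs_of_nonneg (hg0 _)]
      exact hgB' _
    · filter_upwards [ae_restrict_mem measurableSet_Ioc] with s hs using hconv s hs
  have hRHS : Tendsto (fun n => ENNReal.ofReal (Real.exp ((∫ s in Ioc (0:ℝ) t, fn n s) - t)))
      atTop (𝓝 (ENNReal.ofReal (Real.exp ((∫ s in Ioc (0:ℝ) t, g s) - t)))) :=
    (ENNReal.continuous_ofReal.tendsto _).comp
      ((Real.continuous_exp.tendsto _).comp (hint.sub tendsto_const_nhds))
  rw [funext hkey] at hLHS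
  exact tendsto_nhds_unique hLHS hRHS

/-- The product functional for bounded measurable intensities. -/
lemma pp_bdd [IsProbabilityMeasure P] (hmeas : ∀ t, Measurable (N t))
    (h0 : ∀ ω, N 0 ω = 0)
    (hmono : ∀ ω, Monotone fun t => N t ω)
    (hrc : ∀ ω t, ∃ ε > 0, ∀ s ∈ Ico t (t + ε), N s ω = N t ω)
    (hpois : ∀ s t : ℝ, 0 ≤ s → s < t → ∀ k : ℕ,
      P {ω | N t ω - N s ω = k} =
        ENNReal.ofReal (Real.exp (-(t - s)) * (t - s) ^ k / k.factorial))
    (hindep : ∀ (n : ℕ) (τ : ℕ → ℝ), Monotone τ →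
      iIndepFun
        (fun (i : Fin n) ω => N (τ (i + 1)) ω - N (τ i) ω) P)
    (hT : ∀ n ω, T n ω = sInf {u | 0 ≤ u ∧ n ≤ N u ω})
    {t : ℝ} (ht : 0 < t) {f : ℝ → ℝ} (hfm : Measurable f) {B : ℝ}
    (hf0 : ∀ s, 0 ≤ f s) (hfB : ∀ s, f s ≤ B) :
    ∫⁻ ω, ENNReal.ofReal (∏ k ∈ Finset.Icc 1 (N t ω), f (T k ω)) ∂P
      = ENNReal.ofReal (Real.exp ((∫ s in Ioc (0 : ℝ) t, f s) - t)) := by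
  have hB0 : (0:ℝ) ≤ B := le_trans (hf0 0) (hfB 0)
  set B' : ℝ := max B 1 with hB'def
  have hB'0 : (0:ℝ) ≤ B' := le_trans hB0 (le_max_left _ _)
  haveI : IsFiniteMeasure (volume.restrict (Ioc (0:ℝ) t)) :=
    ⟨by rw [Measure.restrict_apply_univ]; exact measure_Ioc_lt_top⟩
  set f' : ℝ → ℝ := (Ioc (0:ℝ) t).indicator f with hf'def
  have hf'meas : Measurable f' := hfm.indicator measurableSet_Ioc
  have hf'int : Integrable f' volume := by
    rw [hf'def, integrable_indicator_iff measurableSet_Ioc]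
    refine Integrable.mono' (integrable_const B) hfm.aestronglyMeasurable.restrict ?_
    refine Eventually.of_forall fun s => ?_
    rw [Real.norm_eq_abs, abs_of_nonneg (hf0 s)]
    exact hfB s
  have happrox : ∀ n : ℕ, ∃ gg : ℝ → ℝ, Continuous gg ∧
      ∫⁻ x, (‖f' x - gg x‖₊ : ℝ≥0∞) ∂volume ≤ (1/2 : ℝ≥0∞)^n := by
    intro n
    obtain ⟨gg, _, hle, hcont, _⟩ :=
      hf'int.exists_hasCompactSupport_lintegral_sub_le
        (pow_ne_zero n (by norm_num : (1/2 : ℝ≥0∞) ≠ 0))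
    exact ⟨gg, hcont, hle⟩
  choose gg hggcont hggle using happrox
  have hsumfin : ∫⁻ x, ∑' n, (‖f' x - gg n x‖₊ : ℝ≥0∞) ∂volume ≠ ∞ := by
    rw [lintegral_tsum (fun n => (show Measurable fun x => (‖f' x - gg n x‖₊ : ℝ≥0∞) from
      (hf'meas.sub (hggcont n).measurable).nnnorm.coe_nnreal_ennreal).aemeasurable)]
    refine ne_of_lt (lt_of_le_of_lt (ENNReal.tsum_le_tsum hggle) ?_)
    rw [ENNReal.tsum_geometric]
    norm_num
  have haecv : ∀ᵐ x ∂(volume : Measure ℝ), Tendsto (fun n => gg n x) atTop (𝓝 (f' x)) := by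
    have hmeassum : Measurable fun x => ∑' n, (‖f' x - gg n x‖₊ : ℝ≥0∞) :=
      Measurable.ennreal_tsum fun n =>
        (hf'meas.sub (hggcont n).measurable).nnnorm.coe_nnreal_ennreal
    filter_upwards [ae_lt_top hmeassum hsumfin] with x hx
    have hterm : Tendsto (fun n => (‖f' x - gg n x‖₊ : ℝ≥0∞)) atTop (𝓝 0) :=
      ENNReal.tendsto_atTop_zero_of_tsum_ne_top hx.ne
    rw [show ((0:ℝ≥0∞)) = ((0 : ℝ≥0) : ℝ≥0∞) from rfl, ENNReal.tendsto_coe] at hterm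
    have hnorm : Tendsto (fun n => ‖gg n x - f' x‖) atTop (𝓝 0) := by
      have h2 : Tendsto (fun n => (‖f' x - gg n x‖₊ : ℝ)) atTop (𝓝 ((0 : ℝ≥0) : ℝ)) :=
        NNReal.tendsto_coe.2 hterm
      simp only [coe_nnnorm, NNReal.coe_zero] at h2
      simpa [norm_sub_rev] using h2
    exact tendsto_iff_norm_sub_tendsto_zero.2 hnorm
  set g' : ℕ → ℝ → ℝ := fun n s => min (max (gg n s) 0) B with hg'def
  have hg'cont : ∀ n, Continuous (g' n) :=
    fun n => ((hggcont n).max continuous_const).min continuous_const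
  have hg'0 : ∀ n s, 0 ≤ g' n s := fun n s => le_min (le_max_right _ _) hB0
  have hg'B : ∀ n s, g' n s ≤ B := fun n s => min_le_right _ _
  have hf'mem : ∀ x, 0 ≤ f' x ∧ f' x ≤ B := by
    intro x
    constructor
    · exact Set.indicator_apply_nonneg fun _ => hf0 x
    · rw [hf'def]
      by_cases hx : x ∈ Ioc (0:ℝ) t
      · rw [indicator_of_mem hx]
        exact hfB x
      · rw [indicator_of_notMem hx]
        exact hB0
  have hg'cv : ∀ x, Tendsto (fun n => gg n x) atTop (𝓝 (f' x)) →
      Tendsto (fun n => g' n x) atTop (𝓝 (f' x)) := by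
    intro x hx
    have hcl : Continuous fun y : ℝ => min (max y 0) B :=
      (continuous_id.max continuous_const).min continuous_const
    have hcomp := (hcl.tendsto (f' x)).comp hx
    have hfix : min (max (f' x) 0) B = f' x := by
      rw [max_eq_left (hf'mem x).1, min_eq_left (hf'mem x).2]
    rwa [hfix] at hcomp
  set Abad : Set ℝ :=
    toMeasurable volume {x | ¬ Tendsto (fun n => g' n x) atTop (𝓝 (f' x))} with hAdef
  have hAbadm : MeasurableSet Abad := measurableSet_toMeasurable _ _
  have hAbad0 : volume Abad = 0 := by
    rw [hAdef, measure_toMeasurable]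
    refine measure_mono_null (fun x hx hc => hx (hg'cv x hc)) ?_
    exact haecv
  have hnull := pp_null hmeas h0 hmono hrc hpois hT ht hAbadm
    (measure_mono_null inter_subset_left hAbad0) (P := P)
  have haeprod : ∀ᵐ ω ∂P, Tendsto
      (fun n => ENNReal.ofReal (∏ k ∈ Finset.Icc 1 (N t ω), g' n (T k ω)))
      atTop (𝓝 (ENNReal.ofReal (∏ k ∈ Finset.Icc 1 (N t ω), f (T k ω)))) := by
    filter_upwards [hnull] with ω hω
    apply (ENNReal.continuous_ofReal.tendsto _).comp
    apply tendsto_finset_prod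
    intro k hk
    rw [Finset.mem_Icc] at hk
    have hmem := pp_mem_Ioc h0 hmono hrc hT ht.le hk.1 hk.2
    have hnb : T k ω ∉ Abad := hω k hk.1 hk.2
    have hcv : Tendsto (fun n => g' n (T k ω)) atTop (𝓝 (f' (T k ω))) := by
      by_contra hc
      exact hnb (subset_toMeasurable _ _ hc)
    rwa [hf'def, indicator_of_mem hmem] at hcv
  have hdom : ∀ n ω, ENNReal.ofReal (∏ k ∈ Finset.Icc 1 (N t ω), g' n (T k ω))
      ≤ ENNReal.ofReal (B' ^ (N t ω)) := by
    intro n ω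
    apply ENNReal.ofReal_le_ofReal
    calc ∏ k ∈ Finset.Icc 1 (N t ω), g' n (T k ω)
        ≤ ∏ _k ∈ Finset.Icc 1 (N t ω), B' :=
          Finset.prod_le_prod (fun k _ => hg'0 n _)
            (fun k _ => le_trans (hg'B n _) (le_max_left _ _))
      _ = B' ^ (N t ω) := by
          rw [Finset.prod_const, Nat.card_Icc, Nat.add_sub_cancel]
  have hbound : ∫⁻ ω, ENNReal.ofReal (B' ^ (N t ω)) ∂P ≠ ∞ := by
    have hmg := pp_mgf hmeas hpois (le_refl (0:ℝ)) ht.le hB'0 (P := P)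
    have hrw : (fun ω => ENNReal.ofReal (B' ^ (N t ω - N 0 ω)))
        = fun ω => ENNReal.ofReal (B' ^ (N t ω)) := by
      funext ω
      rw [h0 ω, Nat.sub_zero]
    rw [hrw] at hmg
    rw [hmg]
    exact ENNReal.ofReal_ne_top
  have hFmeas : ∀ n, Measurable fun ω =>
      ENNReal.ofReal (∏ k ∈ Finset.Icc 1 (N t ω), g' n (T k ω)) :=
    fun n => ENNReal.measurable_ofReal.comp
      (pp_measprod hmeas hmono hrc hT ht.le (hg'cont n).measurable)
  have hLHS := tendsto_lintegral_of_dominated_convergence (μ := P)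
    (fun ω => ENNReal.ofReal (B' ^ (N t ω))) hFmeas
    (fun n => Eventually.of_forall (hdom n)) hbound haeprod
  have hterm : ∀ n, ∫⁻ ω, ENNReal.ofReal (∏ k ∈ Finset.Icc 1 (N t ω), g' n (T k ω)) ∂P
      = ENNReal.ofReal (Real.exp ((∫ s in Ioc (0:ℝ) t, g' n s) - t)) :=
    fun n => pp_cont hmeas h0 hmono hrc hpois hindep hT ht (hg'cont n) (hg'0 n) (hg'B n)
  have hnb_ae : ∀ᵐ x ∂(volume : Measure ℝ), x ∉ Abad := by
    rw [ae_iff]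
    simpa [not_not] using hAbad0
  have hint : Tendsto (fun n => ∫ s in Ioc (0:ℝ) t, g' n s) atTop
      (𝓝 (∫ s in Ioc (0:ℝ) t, f s)) := by
    apply tendsto_integral_of_dominated_convergence (fun _ => B)
    · intro n
      exact (hg'cont n).measurable.aestronglyMeasurable
    · exact integrable_const _
    · intro n
      refine Eventually.of_forall fun s => ?_
      rw [Real.norm_eq_abs, abs_of_nonneg (hg'0 n s)]
      exact hg'B n s
    · filter_upwards [ae_restrict_of_ae hnb_ae, ae_restrict_mem measurableSet_Ioc]
        with x hnb hmem
      have hcv : Tendsto (fun n => g' n x) atTop (𝓝 (f' x)) := by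
        by_contra hc
        exact hnb (subset_toMeasurable _ _ hc)
      rwa [hf'def, indicator_of_mem hmem] at hcv
  have hRHS : Tendsto (fun n => ENNReal.ofReal (Real.exp ((∫ s in Ioc (0:ℝ) t, g' n s) - t)))
      atTop (𝓝 (ENNReal.ofReal (Real.exp ((∫ s in Ioc (0:ℝ) t, f s) - t)))) :=
    (ENNReal.continuous_ofReal.tendsto _).comp
      ((Real.continuous_exp.tendsto _).comp (hint.sub tendsto_const_nhds))
  rw [funext hterm] at hLHS
  exact tendsto_nhds_unique hLHS hRHS

/-- The product functional for integrable nonnegative intensities. -/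
lemma pp_main [IsProbabilityMeasure P] (hmeas : ∀ t, Measurable (N t))
    (h0 : ∀ ω, N 0 ω = 0)
    (hmono : ∀ ω, Monotone fun t => N t ω)
    (hrc : ∀ ω t, ∃ ε > 0, ∀ s ∈ Ico t (t + ε), N s ω = N t ω)
    (hpois : ∀ s t : ℝ, 0 ≤ s → s < t → ∀ k : ℕ,
      P {ω | N t ω - N s ω = k} =
        ENNReal.ofReal (Real.exp (-(t - s)) * (t - s) ^ k / k.factorial))
    (hindep : ∀ (n : ℕ) (τ : ℕ → ℝ), Monotone τ →
      iIndepFun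
        (fun (i : Fin n) ω => N (τ (i + 1)) ω - N (τ i) ω) P)
    (hT : ∀ n ω, T n ω = sInf {u | 0 ≤ u ∧ n ≤ N u ω})
    {t : ℝ} (ht : 0 < t) {f : ℝ → ℝ} (hfm : Measurable f)
    (hf0 : ∀ s, 0 ≤ f s) (hfi : IntegrableOn f (Ioc 0 t)) :
    ∫⁻ ω, ENNReal.ofReal (∏ k ∈ Finset.Icc 1 (N t ω), f (T k ω)) ∂P
      = ENNReal.ofReal (Real.exp ((∫ s in Ioc (0 : ℝ) t, f s) - t)) := by
  set fj : ℕ → ℝ → ℝ := fun j s => min (f s) j with hfjdef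
  have hfjm : ∀ j, Measurable (fj j) := fun j => hfm.min measurable_const
  have hfj0 : ∀ j s, 0 ≤ fj j s := fun j s => le_min (hf0 s) (Nat.cast_nonneg j)
  have hfjB : ∀ j s, fj j s ≤ (j:ℝ) := fun j s => min_le_right _ _
  have hterm : ∀ j : ℕ, ∫⁻ ω, ENNReal.ofReal (∏ k ∈ Finset.Icc 1 (N t ω), fj j (T k ω)) ∂P
      = ENNReal.ofReal (Real.exp ((∫ s in Ioc (0:ℝ) t, fj j s) - t)) :=
    fun j => pp_bdd hmeas h0 hmono hrc hpois hindep hT ht (hfjm j) (hfj0 j) (hfjB j)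
  have hmono' : ∀ ω, Monotone fun j : ℕ => ∏ k ∈ Finset.Icc 1 (N t ω), fj j (T k ω) := by
    intro ω j1 j2 hj
    exact Finset.prod_le_prod (fun k _ => hfj0 j1 _)
      (fun k _ => min_le_min le_rfl (Nat.cast_le.2 hj))
  have heventual : ∀ x : ℝ, Tendsto (fun j : ℕ => fj j x) atTop (𝓝 (f x)) := by
    intro x
    have hev : ∀ᶠ j : ℕ in atTop, fj j x = f x := by
      filter_upwards [eventually_ge_atTop ⌈f x⌉₊] with j hj
      exact min_eq_left (le_trans (Nat.le_ceil _) (Nat.cast_le.2 hj))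
    exact tendsto_const_nhds.congr' (hev.mono fun j hj => hj.symm)
  have hptw : ∀ ω, Tendsto
      (fun j : ℕ => ENNReal.ofReal (∏ k ∈ Finset.Icc 1 (N t ω), fj j (T k ω)))
      atTop (𝓝 (ENNReal.ofReal (∏ k ∈ Finset.Icc 1 (N t ω), f (T k ω)))) := by
    intro ω
    apply (ENNReal.continuous_ofReal.tendsto _).comp
    apply tendsto_finset_prod
    intro k _
    exact heventual _
  have hLHS : Tendsto
      (fun j : ℕ => ∫⁻ ω, ENNReal.ofReal (∏ k ∈ Finset.Icc 1 (N t ω), fj j (T k ω)) ∂P)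
      atTop (𝓝 (∫⁻ ω, ENNReal.ofReal (∏ k ∈ Finset.Icc 1 (N t ω), f (T k ω)) ∂P)) := by
    apply lintegral_tendsto_of_tendsto_of_monotone
    · intro j
      exact (ENNReal.measurable_ofReal.comp
        (pp_measprod hmeas hmono hrc hT ht.le (hfjm j))).aemeasurable
    · refine Eventually.of_forall fun ω => ?_
      intro j1 j2 hj
      exact ENNReal.ofReal_le_ofReal (hmono' ω hj)
    · exact Eventually.of_forall hptw
  have hint : Tendsto (fun j : ℕ => ∫ s in Ioc (0:ℝ) t, fj j s) atTop
      (𝓝 (∫ s in Ioc (0:ℝ) t, f s)) := by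
    apply tendsto_integral_of_dominated_convergence f
    · intro j
      exact (hfjm j).aestronglyMeasurable
    · exact hfi
    · intro j
      refine Eventually.of_forall fun s => ?_
      rw [Real.norm_eq_abs, abs_of_nonneg (hfj0 j s)]
      exact min_le_left _ _
    · exact Eventually.of_forall fun s => heventual s
  have hRHS : Tendsto (fun j : ℕ => ENNReal.ofReal (Real.exp ((∫ s in Ioc (0:ℝ) t, fj j s) - t)))
      atTop (𝓝 (ENNReal.ofReal (Real.exp ((∫ s in Ioc (0:ℝ) t, f s) - t)))) :=
    (ENNReal.continuous_ofReal.tendsto _).comp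
      ((Real.continuous_exp.tendsto _).comp (hint.sub tendsto_const_nhds))
  rw [funext hterm] at hLHS
  exact tendsto_nhds_unique hLHS hRHS

end PoissonAux

/-- Poisson likelihood ratio with deterministic intensity: for a rate-1 Poisson process `N`
with arrival times `T_n` and a positive integrable intensity `λ` on `[0,t]`,
`E[exp(∫_0^t (1 - λ(s)) ds + Σ_{n : T_n ≤ t} log λ(T_n))] = 1` (the sum over arrivals up
to `t` is `Σ_{n=1}^{N_t} log λ(T_n)`). -/
theorem stmt_11 {Ω : Type*} {m : MeasurableSpace Ω} (P : Measure Ω) [IsProbabilityMeasure P]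
    (N : ℝ → Ω → ℕ) (hmeas : ∀ t, Measurable (N t))
    (h0 : ∀ ω, N 0 ω = 0)
    (hmono : ∀ ω, Monotone fun t => N t ω)
    (hrc : ∀ ω t, ∃ ε > 0, ∀ s ∈ Ico t (t + ε), N s ω = N t ω)
    -- Poisson increments with rate 1
    (hpois : ∀ s t : ℝ, 0 ≤ s → s < t → ∀ k : ℕ,
      P {ω | N t ω - N s ω = k} =
        ENNReal.ofReal (Real.exp (-(t - s)) * (t - s) ^ k / k.factorial))
    -- independent increments
    (hindep : ∀ (n : ℕ) (τ : ℕ → ℝ), Monotone τ →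
      iIndepFun
        (fun (i : Fin n) ω => N (τ (i + 1)) ω - N (τ i) ω) P)
    (T : ℕ → Ω → ℝ) (hT : ∀ n ω, T n ω = sInf {u | 0 ≤ u ∧ n ≤ N u ω})
    (t : ℝ) (ht : 0 < t)
    (lam : ℝ → ℝ) (hlmeas : Measurable lam) (hlpos : ∀ s, 0 < lam s)
    (hlint : IntegrableOn lam (Ioc 0 t)) :
    ∫ ω, Real.exp ((∫ s in Ioc (0 : ℝ) t, (1 - lam s)) +
        ∑ k ∈ Finset.Icc 1 (N t ω), Real.log (lam (T k ω))) ∂P = 1 := by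
  set c : ℝ := Real.exp (∫ s in Ioc (0:ℝ) t, (1 - lam s)) with hcdef
  have hZrw : ∀ ω, Real.exp ((∫ s in Ioc (0:ℝ) t, (1 - lam s)) +
      ∑ k ∈ Finset.Icc 1 (N t ω), Real.log (lam (T k ω)))
      = c * ∏ k ∈ Finset.Icc 1 (N t ω), lam (T k ω) := by
    intro ω
    rw [Real.exp_add, Real.exp_sum]
    congr 1
    exact Finset.prod_congr rfl fun k _ => Real.exp_log (hlpos _)
  have hconst : (∫ s in Ioc (0:ℝ) t, (1 - lam s)) = t - ∫ s in Ioc (0:ℝ) t, lam s := by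
    rw [integral_sub (integrable_const 1) hlint]
    congr 1
    rw [setIntegral_const, measureReal_def, Real.volume_Ioc, sub_zero, ENNReal.toReal_ofReal ht.le,
      smul_eq_mul, mul_one]
  have hmain := pp_main hmeas h0 hmono hrc hpois hindep hT ht hlmeas
    (fun s => (hlpos s).le) hlint (P := P)
  have hprodmeas : Measurable fun ω => ∏ k ∈ Finset.Icc 1 (N t ω), lam (T k ω) :=
    pp_measprod hmeas hmono hrc hT ht.le hlmeas
  have hlint2 : ∫⁻ ω, ENNReal.ofReal (c * ∏ k ∈ Finset.Icc 1 (N t ω), lam (T k ω)) ∂P = 1 := by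
    have hsplit : (fun ω => ENNReal.ofReal (c * ∏ k ∈ Finset.Icc 1 (N t ω), lam (T k ω)))
        = fun ω => ENNReal.ofReal c *
            ENNReal.ofReal (∏ k ∈ Finset.Icc 1 (N t ω), lam (T k ω)) := by
      funext ω
      exact ENNReal.ofReal_mul (Real.exp_nonneg _)
    have hm2 : Measurable fun ω => ENNReal.ofReal (∏ k ∈ Finset.Icc 1 (N t ω), lam (T k ω)) :=
      ENNReal.measurable_ofReal.comp hprodmeas
    rw [hsplit, lintegral_const_mul _ hm2, hmain,
      ← ENNReal.ofReal_mul (Real.exp_nonneg _), ← Real.exp_add, hconst]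
    have hz : (t - ∫ s in Ioc (0:ℝ) t, lam s) + ((∫ s in Ioc (0:ℝ) t, lam s) - t) = 0 := by
      ring
    rw [hz, Real.exp_zero, ENNReal.ofReal_one]
  have hZnn : 0 ≤ᵐ[P] fun ω => c * ∏ k ∈ Finset.Icc 1 (N t ω), lam (T k ω) :=
    Eventually.of_forall fun ω => mul_nonneg (Real.exp_nonneg _)
      (Finset.prod_nonneg fun k _ => (hlpos _).le)
  calc ∫ ω, Real.exp ((∫ s in Ioc (0:ℝ) t, (1 - lam s)) +
        ∑ k ∈ Finset.Icc 1 (N t ω), Real.log (lam (T k ω))) ∂P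
      = ∫ ω, c * ∏ k ∈ Finset.Icc 1 (N t ω), lam (T k ω) ∂P :=
        integral_congr_ae (Eventually.of_forall fun ω => hZrw ω)
    _ = (∫⁻ ω, ENNReal.ofReal (c * ∏ k ∈ Finset.Icc 1 (N t ω), lam (T k ω)) ∂P).toReal :=
        integral_eq_lintegral_of_nonneg_ae hZnn
          (measurable_const.mul hprodmeas).aestronglyMeasurable
    _ = 1 := by rw [hlint2, ENNReal.toReal_one]
end
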